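/- Let m be a positive integer and let D₁, D₂ be discriminants with D₁ ≡ D₂ (mod (2m)²). Then ψ_{D₁}(m) = ψ_{D₂}(m). -/

import Mathlib

open scoped BigOperators Real

/-- An integer is a *discriminant* if it is congruent to 0 or 1 mod 4. -/
def IsDiscriminant (D : ℤ) : Prop := D % 4 = 0 ∨ D % 4 = 1

/-- A *fundamental discriminant* (including `1`, for positive square discriminants). -/
def IsFundamentalDiscriminant (d : ℤ) : Prop :=
  (Squarefree d ∧ d % 4 = 1) ∨
    (∃ m : ℤ, d = 4 * m ∧ Squarefree m ∧ (m % 4 = 2 ∨ m % 4 = 3))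

/-- The Kronecker symbol `(d | m)` for `m > 0`, defined by complete multiplicativity in `m`
from the Jacobi symbol on the odd part and the standard value at `2`. -/
noncomputable def kron (d : ℤ) (m : ℕ) : ℤ :=
  (if d % 2 = 0 then 0 else if d % 8 = 1 ∨ d % 8 = 7 then 1 else -1) ^ (m.factorization 2) *
    jacobiSym d (m / 2 ^ (m.factorization 2))

-- `ψ_D(m) = (d | m / gcd(m, ℓ))` where `D = d ℓ²` with `d` a fundamental discriminant,
-- with the convention `ψ_0(m) = 1`.
open Classical in
noncomputable def psi (D : ℤ) (m : ℕ) : ℤ :=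
  if D = 0 then 1
  else if h : ∃ p : ℤ × ℕ, IsFundamentalDiscriminant p.1 ∧ D = p.1 * (p.2 : ℤ) ^ 2 then
    kron h.choose.1 (m / m.gcd h.choose.2)
  else 0

/-- `ψ̄_t(m) = φ(m²)⁻¹ ∑_{n mod m², (n,m)=1} ψ_{t²-4n}(m)`. -/
noncomputable def psibar (t : ℤ) (m : ℕ) : ℝ :=
  (Nat.totient (m ^ 2) : ℝ)⁻¹ *
    ∑ n ∈ Finset.range (m ^ 2), if Nat.gcd n m = 1 then (psi (t ^ 2 - 4 * n) m : ℝ) else 0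

/-- `L(1, ψ_D) = ∑_{m ≥ 1} ψ_D(m)/m`, as the limit of the partial sums
(the series is in general only conditionally convergent). -/
noncomputable def LpsiOne (D : ℤ) : ℝ :=
  Filter.limUnder Filter.atTop (fun X : ℕ => ∑ m ∈ Finset.Icc 1 X, (psi D m : ℝ) / m)

/-- `L(1, ψ̄_t) = ∑_{m ≥ 1} ψ̄_t(m)/m`. -/
noncomputable def LpsibarOne (t : ℤ) : ℝ := ∑' m : ℕ, psibar t (m + 1) / (m + 1)

/-! ### Auxiliary machinery -/

namespace PsiAux

/-- The value of the Kronecker symbol at the prime 2 (as a function of `d`). -/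
noncomputable def chi2 (d : ℤ) : ℤ :=
  if d % 2 = 0 then 0 else if d % 8 = 1 ∨ d % 8 = 7 then 1 else -1

/-- The value of the Kronecker symbol at a prime `p`. -/
noncomputable def chi (d : ℤ) (p : ℕ) : ℤ :=
  if p = 2 then chi2 d else jacobiSym d p

lemma odd_sq_mod8 {u : ℤ} (hu : ¬ (2:ℤ) ∣ u) : ∃ s : ℤ, u ^ 2 = 8 * s + 1 := by
  obtain ⟨k, hk⟩ : ∃ k, u = 2 * k + 1 := ⟨u / 2, by omega⟩
  obtain ⟨j, hj⟩ := Int.even_mul_succ_self k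
  exact ⟨j, by subst hk; linear_combination 4 * hj⟩

lemma fund_ne_zero {d : ℤ} (h : IsFundamentalDiscriminant d) : d ≠ 0 := by
  rcases h with ⟨hs, -⟩ | ⟨n, rfl, hs, -⟩
  · exact hs.ne_zero
  · have := hs.ne_zero
    intro hc
    omega

lemma fund_not_sq_dvd {d : ℤ} (h : IsFundamentalDiscriminant d) {p : ℕ} (hpp : p.Prime)
    (hp2 : p ≠ 2) : ¬ ((p:ℤ))^2 ∣ d := by
  have hpZ : Prime (p:ℤ) := Nat.prime_iff_prime_int.mp hpp
  intro hd
  rcases h with ⟨hs, -⟩ | ⟨n, rfl, hs, -⟩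
  · exact hpZ.not_unit (hs p (by rwa [← sq]))
  · -- p^2 ∣ 4 n with p odd : get p^2 ∣ n
    have hp4 : ¬ (p:ℤ) ∣ 4 := by
      intro hh
      have h4 : p ∣ 4 := by
        have : ((p:ℤ)) ∣ ((4:ℕ):ℤ) := by exact_mod_cast hh
        exact_mod_cast Int.natCast_dvd_natCast.mp this
      have : p ∣ 2 := hpp.dvd_of_dvd_pow (show p ∣ 2^2 by norm_num [h4])
      exact hp2 ((Nat.prime_dvd_prime_iff_eq hpp Nat.prime_two).mp this)
    have : ((p:ℤ))^2 ∣ n := hpZ.pow_dvd_of_dvd_mul_left 2 hp4 hd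
    exact hpZ.not_unit (hs p (by rwa [← sq]))

lemma fund_not_16_dvd {d : ℤ} (h : IsFundamentalDiscriminant d) : ¬ (16:ℤ) ∣ d := by
  intro hd
  rcases h with ⟨-, h4⟩ | ⟨n, rfl, hs, -⟩
  · omega
  · have h4n : (4:ℤ) ∣ n := by omega
    obtain ⟨k, rfl⟩ := h4n
    have : IsUnit (2:ℤ) := hs 2 ⟨k, by ring⟩
    norm_num [Int.isUnit_iff] at this

lemma ordCompl_int {p : ℕ} (hpp : p.Prime) {ℓ : ℕ} (hℓ : ℓ ≠ 0) :
    ∃ u : ℤ, (ℓ : ℤ) = (p:ℤ) ^ (ℓ.factorization p) * u ∧ ¬ (p:ℤ) ∣ u := by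
  refine ⟨(ℓ / p ^ ℓ.factorization p : ℕ), ?_, ?_⟩
  · exact_mod_cast (Nat.ordProj_mul_ordCompl_eq_self ℓ p).symm
  · intro hc
    exact Nat.not_dvd_ordCompl hpp hℓ (Int.natCast_dvd_natCast.mp hc)

/-! ### kron as a product over primes -/

lemma kron_def (d : ℤ) (n : ℕ) :
    kron d n = chi2 d ^ (n.factorization 2) * jacobiSym d (n / 2 ^ (n.factorization 2)) := rfl

lemma kron_one (d : ℤ) : kron d 1 = 1 := by
  simp [kron, Nat.factorization_one, jacobiSym.one_right]

lemma kron_mul (d : ℤ) {x y : ℕ} (hx : x ≠ 0) (hy : y ≠ 0) :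
    kron d (x * y) = kron d x * kron d y := by
  have h1 : (x*y).factorization 2 = x.factorization 2 + y.factorization 2 := by
    rw [Nat.factorization_mul hx hy]; rfl
  have h2 : (x*y) / 2 ^ ((x*y).factorization 2)
      = (x / 2 ^ (x.factorization 2)) * (y / 2 ^ (y.factorization 2)) :=
    Nat.ordCompl_mul x y 2
  rw [kron_def, kron_def, kron_def, h2, h1, pow_add,
    jacobiSym.mul_right' d (Nat.ordCompl_pos 2 hx).ne' (Nat.ordCompl_pos 2 hy).ne']
  ring

lemma kron_prime_pow (d : ℤ) {p : ℕ} (hpp : p.Prime) (k : ℕ) :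
    kron d (p ^ k) = chi d p ^ k := by
  rcases eq_or_ne p 2 with rfl | hne
  · have h2 : ((2:ℕ)^k).factorization 2 = k := by
      rw [Nat.Prime.factorization_pow hpp]; simp
    rw [kron_def, h2, Nat.div_self (pow_pos (by norm_num) k), jacobiSym.one_right, mul_one]
    simp [chi, chi2]
  · have h2 : ((p:ℕ)^k).factorization 2 = 0 := by
      rw [Nat.Prime.factorization_pow hpp, Finsupp.single_apply]
      simp [hne]
    rw [kron_def, h2]
    simp [chi, hne, jacobiSym.pow_right]

lemma kron_eq_prod (d : ℤ) {n : ℕ} (hn : n ≠ 0) :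
    kron d n = ∏ p ∈ n.primeFactors, chi d p ^ n.factorization p := by
  have hmult : ∀ x y : ℕ, Nat.Coprime x y → kron d (x*y) = kron d x * kron d y := by
    intro x y hxy
    rcases eq_or_ne x 0 with rfl | hx
    · have : y = 1 := Nat.coprime_zero_left y |>.mp hxy
      subst this; simp [kron_one]
    rcases eq_or_ne y 0 with rfl | hy
    · have : x = 1 := Nat.coprime_zero_right x |>.mp hxy
      subst this; simp [kron_one]
    exact kron_mul d hx hy
  rw [Nat.multiplicative_factorization (kron d) hmult (kron_one d) hn, Finsupp.prod]
  rw [Nat.support_factorization]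
  exact Finset.prod_congr rfl fun p hp =>
    kron_prime_pow d (Nat.prime_of_mem_primeFactors hp) _

lemma kron_div_gcd (d : ℤ) {m ℓ : ℕ} (hm : m ≠ 0) (hℓ : ℓ ≠ 0) :
    kron d (m / m.gcd ℓ) = ∏ p ∈ m.primeFactors,
      chi d p ^ (m.factorization p - min (m.factorization p) (ℓ.factorization p)) := by
  have hg : m.gcd ℓ ∣ m := Nat.gcd_dvd_left m ℓ
  have hgpos : 0 < m.gcd ℓ := Nat.gcd_pos_of_pos_left ℓ (Nat.pos_of_ne_zero hm)
  have hq : m / m.gcd ℓ ≠ 0 :=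
    (Nat.div_pos (Nat.le_of_dvd (Nat.pos_of_ne_zero hm) hg) hgpos).ne'
  have key : ∀ p, (m / m.gcd ℓ).factorization p
      = m.factorization p - min (m.factorization p) (ℓ.factorization p) := by
    intro p
    rw [Nat.factorization_div hg, Nat.factorization_gcd hm hℓ, Finsupp.tsub_apply,
      Finsupp.inf_apply]
  have hsub : (m / m.gcd ℓ).primeFactors ⊆ m.primeFactors :=
    Nat.primeFactors_mono (Nat.div_dvd_of_dvd hg) hm
  rw [kron_eq_prod d hq]
  rw [Finset.prod_subset hsub (by
    intro p _ hnp
    have : (m / m.gcd ℓ).factorization p = 0 := by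
      simpa [Nat.support_factorization] using Finsupp.notMem_support_iff.mp
        (by rwa [Nat.support_factorization])
    simp [this])]
  exact Finset.prod_congr rfl fun p _ => by rw [key p]

/-! ### Local lemma at odd primes -/

lemma local_odd_core {p : ℕ} (hpp : p.Prime) (hp2 : p ≠ 2) {a : ℕ} (ha : 1 ≤ a)
    {d₁ d₂ : ℤ} {ℓ₁ ℓ₂ : ℕ}
    (h₁ : IsFundamentalDiscriminant d₁) (h₂ : IsFundamentalDiscriminant d₂)
    (hℓ₁ : ℓ₁ ≠ 0) (hℓ₂ : ℓ₂ ≠ 0)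
    (hlt : ℓ₁.factorization p < a) (hle : ℓ₁.factorization p ≤ ℓ₂.factorization p)
    (hdvd : ((p:ℤ))^(2*a) ∣ d₁ * (ℓ₁:ℤ)^2 - d₂ * (ℓ₂:ℤ)^2) :
    jacobiSym d₁ p ^ (a - min a (ℓ₁.factorization p))
      = jacobiSym d₂ p ^ (a - min a (ℓ₂.factorization p)) := by
  have hpZ : Prime (p:ℤ) := Nat.prime_iff_prime_int.mp hpp
  set e₁ := ℓ₁.factorization p with he₁
  set e₂ := ℓ₂.factorization p with he₂
  obtain ⟨u₁, hu₁, hpu₁⟩ := ordCompl_int hpp hℓ₁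
  obtain ⟨u₂, hu₂, hpu₂⟩ := ordCompl_int hpp hℓ₂
  rw [← he₁] at hu₁
  rw [← he₂] at hu₂
  set Δ := e₂ - e₁ with hΔ
  have he₂' : e₂ = e₁ + Δ := by omega
  have hX : d₁ * (ℓ₁:ℤ)^2 - d₂ * (ℓ₂:ℤ)^2
      = (p:ℤ)^(2*e₁) * (d₁ * u₁^2 - (p:ℤ)^(2*Δ) * (d₂ * u₂^2)) := by
    rw [hu₁, hu₂, he₂']; ring
  have hG : ((p:ℤ))^2 ∣ d₁ * u₁^2 - (p:ℤ)^(2*Δ) * (d₂ * u₂^2) := by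
    have h1 : ((p:ℤ))^(2*e₁) * ((p:ℤ))^2 ∣ d₁ * (ℓ₁:ℤ)^2 - d₂ * (ℓ₂:ℤ)^2 := by
      refine dvd_trans ?_ hdvd
      rw [← pow_add]
      exact pow_dvd_pow _ (by omega)
    rw [hX] at h1
    exact (mul_dvd_mul_iff_left (pow_ne_zero (2*e₁) (by exact_mod_cast hpp.ne_zero))).mp h1
  rcases Nat.eq_zero_or_pos Δ with hΔ0 | hΔpos
  · -- Δ = 0 : same exponent, compare the symbols
    have hee : e₂ = e₁ := by omega
    rw [hΔ0] at hG
    simp only [mul_zero, pow_zero, one_mul] at hG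
    have hp1 : ((p:ℤ)) ∣ d₁ * u₁^2 - d₂ * u₂^2 :=
      dvd_trans (dvd_pow_self _ two_ne_zero) hG
    rw [hee]
    congr 1
    by_cases hd : (p:ℤ) ∣ d₁
    · have hd2 : (p:ℤ) ∣ d₂ := by
        have hd1 : (p:ℤ) ∣ d₂ * u₂^2 := by
          have heq : d₂ * u₂^2 = d₁ * u₁^2 - (d₁ * u₁^2 - d₂ * u₂^2) := by ring
          rw [heq]
          exact dvd_sub (hd.mul_right _) hp1
        exact (hpZ.dvd_or_dvd hd1).resolve_right (fun hc => hpu₂ (hpZ.dvd_of_dvd_pow hc))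
      have hz : ∀ d : ℤ, (p:ℤ) ∣ d → jacobiSym d p = 0 := by
        intro d hdp
        haveI : NeZero p := ⟨hpp.ne_zero⟩
        rw [jacobiSym.eq_zero_iff_not_coprime]
        intro h1
        exact hpZ.not_unit ((Int.isCoprime_iff_gcd_eq_one.mpr h1).isUnit_of_dvd' hdp dvd_rfl)
      rw [hz d₁ hd, hz d₂ hd2]
    · have hgcd : ∀ u : ℤ, ¬ (p:ℤ) ∣ u → Int.gcd u p = 1 := by
        intro u hu
        have h1 : ¬ p ∣ u.natAbs := fun hc => hu (Int.natCast_dvd.mpr hc)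
        have h2 : Nat.Coprime u.natAbs p := ((Nat.Prime.coprime_iff_not_dvd hpp).mpr h1).symm
        simpa [Int.gcd] using h2
      calc jacobiSym d₁ p = jacobiSym (d₁ * u₁^2) p := by
            rw [jacobiSym.mul_left, jacobiSym.sq_one' (hgcd u₁ hpu₁), mul_one]
        _ = jacobiSym (d₂ * u₂^2) p := by
            apply jacobiSym.mod_left'
            have hneg : ((p:ℕ):ℤ) ∣ (d₂*u₂^2) - (d₁*u₁^2) := by
              rw [show (d₂*u₂^2) - (d₁*u₁^2) = -(d₁*u₁^2 - d₂*u₂^2) by ring]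
              exact dvd_neg.mpr hp1
            exact Int.modEq_iff_dvd.mpr hneg
        _ = jacobiSym d₂ p := by
            rw [jacobiSym.mul_left, jacobiSym.sq_one' (hgcd u₂ hpu₂), mul_one]
  · -- Δ ≥ 1 : p² ∣ d₁, contradiction
    exfalso
    have h1 : ((p:ℤ))^2 ∣ (p:ℤ)^(2*Δ) * (d₂ * u₂^2) :=
      dvd_mul_of_dvd_left (pow_dvd_pow _ (by omega)) _
    have h2 : ((p:ℤ))^2 ∣ d₁ * u₁^2 := by
      have h3 := dvd_add hG h1
      simpa using h3
    have h3 : ((p:ℤ))^2 ∣ d₁ :=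
      hpZ.pow_dvd_of_dvd_mul_right 2 (fun hc => hpu₁ (hpZ.dvd_of_dvd_pow hc)) h2
    exact fund_not_sq_dvd h₁ hpp hp2 h3

lemma local_odd {p : ℕ} (hpp : p.Prime) (hp2 : p ≠ 2) {a : ℕ} (ha : 1 ≤ a)
    {d₁ d₂ : ℤ} {ℓ₁ ℓ₂ : ℕ}
    (h₁ : IsFundamentalDiscriminant d₁) (h₂ : IsFundamentalDiscriminant d₂)
    (hℓ₁ : ℓ₁ ≠ 0) (hℓ₂ : ℓ₂ ≠ 0)
    (hdvd : ((p:ℤ))^(2*a) ∣ d₁ * (ℓ₁:ℤ)^2 - d₂ * (ℓ₂:ℤ)^2) :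
    jacobiSym d₁ p ^ (a - min a (ℓ₁.factorization p))
      = jacobiSym d₂ p ^ (a - min a (ℓ₂.factorization p)) := by
  have hdvd' : ((p:ℤ))^(2*a) ∣ d₂ * (ℓ₂:ℤ)^2 - d₁ * (ℓ₁:ℤ)^2 := by
    rw [show d₂ * (ℓ₂:ℤ)^2 - d₁ * (ℓ₁:ℤ)^2 = -(d₁ * (ℓ₁:ℤ)^2 - d₂ * (ℓ₂:ℤ)^2) by ring]
    exact dvd_neg.mpr hdvd
  rcases lt_or_ge (ℓ₁.factorization p) a with hlt | hge
  · rcases le_or_gt (ℓ₁.factorization p) (ℓ₂.factorization p) with hle | hgt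
    · exact local_odd_core hpp hp2 ha h₁ h₂ hℓ₁ hℓ₂ hlt hle hdvd
    · exact (local_odd_core hpp hp2 ha h₂ h₁ hℓ₂ hℓ₁ (hgt.trans hlt) hgt.le hdvd').symm
  · rcases lt_or_ge (ℓ₂.factorization p) a with hlt2 | hge2
    · exact (local_odd_core hpp hp2 ha h₂ h₁ hℓ₂ hℓ₁ hlt2 (hlt2.le.trans hge) hdvd').symm
    · rw [min_eq_left hge, min_eq_left hge2, Nat.sub_self, pow_zero, pow_zero]

/-! ### Local lemma at 2 -/

lemma local_two_core {a : ℕ} (ha : 1 ≤ a)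
    {d₁ d₂ : ℤ} {ℓ₁ ℓ₂ : ℕ}
    (h₁ : IsFundamentalDiscriminant d₁) (h₂ : IsFundamentalDiscriminant d₂)
    (hℓ₁ : ℓ₁ ≠ 0) (hℓ₂ : ℓ₂ ≠ 0)
    (hlt : ℓ₁.factorization 2 < a) (hle : ℓ₁.factorization 2 ≤ ℓ₂.factorization 2)
    (hdvd : ((2:ℤ))^(2*a+2) ∣ d₁ * (ℓ₁:ℤ)^2 - d₂ * (ℓ₂:ℤ)^2) :
    chi2 d₁ ^ (a - min a (ℓ₁.factorization 2))
      = chi2 d₂ ^ (a - min a (ℓ₂.factorization 2)) := by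
  set e₁ := ℓ₁.factorization 2 with he₁
  set e₂ := ℓ₂.factorization 2 with he₂
  obtain ⟨u₁, hu₁, hpu₁⟩ := ordCompl_int Nat.prime_two hℓ₁
  obtain ⟨u₂, hu₂, hpu₂⟩ := ordCompl_int Nat.prime_two hℓ₂
  push_cast at hu₁ hu₂ hpu₁ hpu₂
  rw [← he₁] at hu₁
  rw [← he₂] at hu₂
  set Δ := e₂ - e₁ with hΔ
  have he₂' : e₂ = e₁ + Δ := by omega
  have hX : d₁ * (ℓ₁:ℤ)^2 - d₂ * (ℓ₂:ℤ)^2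
      = (2:ℤ)^(2*e₁) * (d₁ * u₁^2 - (2:ℤ)^(2*Δ) * (d₂ * u₂^2)) := by
    rw [hu₁, hu₂, he₂']; ring
  have hG : (16:ℤ) ∣ d₁ * u₁^2 - (2:ℤ)^(2*Δ) * (d₂ * u₂^2) := by
    have h1 : ((2:ℤ))^(2*e₁) * (16:ℤ) ∣ d₁ * (ℓ₁:ℤ)^2 - d₂ * (ℓ₂:ℤ)^2 := by
      refine dvd_trans ?_ hdvd
      rw [show (16:ℤ) = 2^4 by norm_num, ← pow_add]
      exact pow_dvd_pow _ (by omega)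
    rw [hX] at h1
    exact (mul_dvd_mul_iff_left (pow_ne_zero (2*e₁) (by norm_num))).mp h1
  obtain ⟨s₁, hs₁⟩ := odd_sq_mod8 hpu₁
  obtain ⟨s₂, hs₂⟩ := odd_sq_mod8 hpu₂
  rw [hs₁, hs₂] at hG
  have hlhs0 : ∀ d : ℤ, d % 2 = 0 → ∀ k, k < a → chi2 d ^ (a - min a k) = 0 := by
    intro d hd k hk
    rw [chi2, if_pos hd]
    exact zero_pow (by omega)
  rcases h₁ with ⟨hsq₁, hm₁⟩ | ⟨m₁, rfl, hsqm₁, hm₁⟩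
  · -- d₁ odd
    rcases h₂ with ⟨hsq₂, hm₂⟩ | ⟨m₂, rfl, hsqm₂, hm₂⟩
    · -- d₂ odd
      rcases Nat.eq_zero_or_pos Δ with hΔ0 | hΔpos
      · -- Δ = 0 : d₁ ≡ d₂ mod 8
        have hee : e₂ = e₁ := by omega
        rw [hΔ0] at hG
        simp only [mul_zero, pow_zero, one_mul] at hG
        obtain ⟨c, hc⟩ := hG
        have h8 : (8:ℤ) ∣ d₁ - d₂ := ⟨2*c - d₁*s₁ + d₂*s₂, by linear_combination hc⟩
        have hmod8 : d₁ % 8 = d₂ % 8 := by omega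
        have hmod2 : d₁ % 2 = d₂ % 2 := by omega
        rw [hee]
        congr 1
        rw [chi2, chi2, hmod8, hmod2]
      · -- Δ ≥ 1 : parity contradiction
        exfalso
        obtain ⟨k, hk⟩ : ∃ k, Δ = k + 1 := ⟨Δ - 1, by omega⟩
        rw [hk, show (2:ℤ)^(2*(k+1)) = 4*2^(2*k) from by
          rw [show 2*(k+1)=2*k+2 from by ring, pow_add]; norm_num [mul_comm]] at hG
        obtain ⟨c, hc⟩ := hG
        have h2 : (2:ℤ) ∣ d₁ :=
          ⟨8*c + 2*(2^(2*k)*(d₂*(8*s₂+1))) - 4*(d₁*s₁), by linear_combination hc⟩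
        omega
    · -- d₂ = 4 m₂ : parity contradiction
      exfalso
      rw [show (2:ℤ)^(2*Δ)*(4*m₂*(8*s₂+1)) = 4*(2^(2*Δ)*(m₂*(8*s₂+1))) from by ring] at hG
      obtain ⟨c, hc⟩ := hG
      have h2 : (2:ℤ) ∣ d₁ :=
        ⟨8*c + 2*(2^(2*Δ)*(m₂*(8*s₂+1))) - 4*(d₁*s₁), by linear_combination hc⟩
      omega
  · -- d₁ = 4 m₁ : LHS = 0, show RHS = 0
    have hL : chi2 (4*m₁) ^ (a - min a e₁) = 0 := hlhs0 _ (by omega) e₁ hlt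
    rw [hL]
    rcases h₂ with ⟨hsq₂, hm₂⟩ | ⟨m₂, rfl, hsqm₂, hm₂⟩
    · -- d₂ odd : impossible
      exfalso
      rcases Nat.lt_or_ge Δ 2 with hΔsm | hΔbig
      · interval_cases Δ
        · -- Δ = 0 : d₂ even, contradiction
          simp only [mul_zero, pow_zero, one_mul] at hG
          obtain ⟨c, hc⟩ := hG
          have h2 : (2:ℤ) ∣ d₂ :=
            ⟨2*(m₁*(8*s₁+1)) - 8*c - 4*(d₂*s₂), by linear_combination -hc⟩
          omega
        · -- Δ = 1 : 4 ∣ m₁ u₁² - d₂ u₂² mod-4 contradiction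
          rw [show (2:ℤ)^(2*1) = 4 from by norm_num] at hG
          obtain ⟨c, hc⟩ := hG
          have h4 : (4:ℤ) ∣ m₁ - d₂ := by
            refine ⟨c - 2*(m₁*s₁) + 2*(d₂*s₂), ?_⟩
            linarith
          omega
      · -- Δ ≥ 2 : 4 ∣ m₁ u₁², contradiction
        obtain ⟨k, hk⟩ : ∃ k, Δ = k + 2 := ⟨Δ - 2, by omega⟩
        rw [hk, show (2:ℤ)^(2*(k+2)) = 16 * 2^(2*k) from by
          rw [show 2*(k+2)=2*k+4 from by ring, pow_add]; norm_num [mul_comm]] at hG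
        obtain ⟨c, hc⟩ := hG
        have h4 : (4:ℤ) ∣ m₁ := by
          refine ⟨c + 2^(2*k)*(d₂*(8*s₂+1)) - 2*(m₁*s₁), ?_⟩
          linarith
        omega
    · -- d₂ = 4 m₂
      rcases Nat.eq_zero_or_pos Δ with hΔ0 | hΔpos
      · -- Δ = 0 : both sides zero
        have hee : e₂ = e₁ := by omega
        rw [hee]
        exact (hlhs0 _ (by omega) e₁ hlt).symm
      · -- Δ ≥ 1 : 4 ∣ m₁ u₁², contradiction
        exfalso
        obtain ⟨k, hk⟩ : ∃ k, Δ = k + 1 := ⟨Δ - 1, by omega⟩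
        rw [hk, show (2:ℤ)^(2*(k+1)) = 4*2^(2*k) from by
          rw [show 2*(k+1)=2*k+2 from by ring, pow_add]; norm_num [mul_comm]] at hG
        obtain ⟨c, hc⟩ := hG
        have h4 : (4:ℤ) ∣ m₁ := by
          refine ⟨c + 2^(2*k)*(m₂*(8*s₂+1)) - 2*(m₁*s₁), ?_⟩
          linarith
        omega

lemma local_two {a : ℕ} (ha : 1 ≤ a)
    {d₁ d₂ : ℤ} {ℓ₁ ℓ₂ : ℕ}
    (h₁ : IsFundamentalDiscriminant d₁) (h₂ : IsFundamentalDiscriminant d₂)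
    (hℓ₁ : ℓ₁ ≠ 0) (hℓ₂ : ℓ₂ ≠ 0)
    (hdvd : ((2:ℤ))^(2*a+2) ∣ d₁ * (ℓ₁:ℤ)^2 - d₂ * (ℓ₂:ℤ)^2) :
    chi2 d₁ ^ (a - min a (ℓ₁.factorization 2))
      = chi2 d₂ ^ (a - min a (ℓ₂.factorization 2)) := by
  have hdvd' : ((2:ℤ))^(2*a+2) ∣ d₂ * (ℓ₂:ℤ)^2 - d₁ * (ℓ₁:ℤ)^2 := by
    rw [show d₂ * (ℓ₂:ℤ)^2 - d₁ * (ℓ₁:ℤ)^2 = -(d₁ * (ℓ₁:ℤ)^2 - d₂ * (ℓ₂:ℤ)^2) by ring]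
    exact dvd_neg.mpr hdvd
  rcases lt_or_ge (ℓ₁.factorization 2) a with hlt | hge
  · rcases le_or_gt (ℓ₁.factorization 2) (ℓ₂.factorization 2) with hle | hgt
    · exact local_two_core ha h₁ h₂ hℓ₁ hℓ₂ hlt hle hdvd
    · exact (local_two_core ha h₂ h₁ hℓ₂ hℓ₁ (hgt.trans hlt) hgt.le hdvd').symm
  · rcases lt_or_ge (ℓ₂.factorization 2) a with hlt2 | hge2
    · exact (local_two_core ha h₂ h₁ hℓ₂ hℓ₁ hlt2 (hlt2.le.trans hge) hdvd').symm
    · rw [min_eq_left hge, min_eq_left hge2, Nat.sub_self, pow_zero, pow_zero]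

/-! ### The global congruence lemma -/

lemma kron_congr {m : ℕ} (hm : m ≠ 0) {d₁ d₂ : ℤ} {ℓ₁ ℓ₂ : ℕ}
    (h₁ : IsFundamentalDiscriminant d₁) (h₂ : IsFundamentalDiscriminant d₂)
    (hℓ₁ : ℓ₁ ≠ 0) (hℓ₂ : ℓ₂ ≠ 0)
    (hdvd : (4 * (m:ℤ)^2) ∣ d₁ * (ℓ₁:ℤ)^2 - d₂ * (ℓ₂:ℤ)^2) :
    kron d₁ (m / m.gcd ℓ₁) = kron d₂ (m / m.gcd ℓ₂) := by
  rw [kron_div_gcd d₁ hm hℓ₁, kron_div_gcd d₂ hm hℓ₂]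
  refine Finset.prod_congr rfl fun p hp => ?_
  have hpp := Nat.prime_of_mem_primeFactors hp
  have hpd : p ∣ m := Nat.dvd_of_mem_primeFactors hp
  have ha1 : 1 ≤ m.factorization p := hpp.factorization_pos_of_dvd hm hpd
  have hpow : ((p:ℤ))^(m.factorization p) ∣ (m:ℤ) := by
    exact_mod_cast Int.natCast_dvd_natCast.mpr (Nat.ordProj_dvd m p)
  have hsq : (((p:ℤ))^(m.factorization p))^2 ∣ (m:ℤ)^2 := pow_dvd_pow_of_dvd hpow 2
  rcases eq_or_ne p 2 with rfl | hp2
  · have hdvd2 : ((2:ℤ))^(2*(m.factorization 2)+2) ∣ d₁ * (ℓ₁:ℤ)^2 - d₂ * (ℓ₂:ℤ)^2 := by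
      refine dvd_trans ?_ hdvd
      calc ((2:ℤ))^(2*(m.factorization 2)+2) = 4 * ((2:ℤ)^(m.factorization 2))^2 := by ring
        _ ∣ 4 * (m:ℤ)^2 := mul_dvd_mul_left 4 (by exact_mod_cast hsq)
    simp only [chi, if_pos rfl]
    exact local_two ha1 h₁ h₂ hℓ₁ hℓ₂ hdvd2
  · have hdvdp : ((p:ℤ))^(2*(m.factorization p)) ∣ d₁ * (ℓ₁:ℤ)^2 - d₂ * (ℓ₂:ℤ)^2 := by
      refine dvd_trans ?_ (dvd_trans (dvd_mul_left _ 4) hdvd)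
      calc ((p:ℤ))^(2*(m.factorization p)) = (((p:ℤ))^(m.factorization p))^2 := by ring
        _ ∣ (m:ℤ)^2 := hsq
    simp only [chi, if_neg hp2]
    exact local_odd hpp hp2 ha1 h₁ h₂ hℓ₁ hℓ₂ hdvdp

/-! ### Existence of the decomposition, and unfolding psi -/

lemma exists_decomp {D : ℤ} (hD : IsDiscriminant D) (h0 : D ≠ 0) :
    ∃ p : ℤ × ℕ, IsFundamentalDiscriminant p.1 ∧ D = p.1 * (p.2 : ℤ) ^ 2 := by
  obtain ⟨A, b, hab, hsqA⟩ := Nat.sq_mul_squarefree D.natAbs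
  have hD' : ∃ s : ℤ, Squarefree s ∧ D = s * (b:ℤ)^2 := by
    rcases Int.natAbs_eq D with h | h
    · refine ⟨(A:ℤ), Int.squarefree_natCast.mpr hsqA, ?_⟩
      rw [h, ← hab]; push_cast; ring
    · refine ⟨-(A:ℤ), ?_, ?_⟩
      · rw [← Int.squarefree_natAbs]
        simpa using hsqA
      · rw [h, ← hab]; push_cast; ring
  obtain ⟨s, hsq, hDe⟩ := hD'
  have hb0 : b ≠ 0 := by
    intro hb
    apply h0
    rw [hDe, hb]; simp
  have hs4 : s % 4 ≠ 0 := by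
    intro hc
    obtain ⟨k, hk⟩ : (4:ℤ) ∣ s := by omega
    exact (by norm_num [Int.isUnit_iff] : ¬ IsUnit (2:ℤ)) (hsq 2 ⟨k, by rw [hk]; ring⟩)
  rcases eq_or_ne (s % 4) 1 with hs1 | hsn1
  · exact ⟨(s, b), Or.inl ⟨hsq, hs1⟩, hDe⟩
  · -- s % 4 = 2 or 3; then b must be even
    have hs23 : s % 4 = 2 ∨ s % 4 = 3 := by omega
    have hbe : 2 ∣ b := by
      by_contra hbo
      have hbZ : ¬ (2:ℤ) ∣ (b:ℤ) := by
        intro hc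
        exact hbo (by exact_mod_cast Int.natCast_dvd_natCast.mp (by exact_mod_cast hc))
      obtain ⟨t, ht⟩ := odd_sq_mod8 hbZ
      have h8 : (8:ℤ) ∣ D - s := ⟨s*t, by rw [hDe, ht]; ring⟩
      rcases hD with h | h <;> omega
    obtain ⟨b', rfl⟩ := hbe
    refine ⟨(4*s, b'), Or.inr ⟨s, rfl, hsq, hs23⟩, ?_⟩
    rw [hDe]; push_cast; ring

lemma kron_one_left (n : ℕ) : kron 1 n = 1 := by
  rw [kron]
  norm_num [jacobiSym.one_left]

lemma psi_eq_kron {D : ℤ} (h0 : D ≠ 0)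
    (hex : ∃ p : ℤ × ℕ, IsFundamentalDiscriminant p.1 ∧ D = p.1 * (p.2 : ℤ) ^ 2) (m : ℕ) :
    psi D m = kron hex.choose.1 (m / m.gcd hex.choose.2) := by
  rw [psi, if_neg h0, dif_pos hex]

lemma ell_ne_zero {D d : ℤ} {ℓ : ℕ} (h0 : D ≠ 0) (h : D = d * (ℓ:ℤ)^2) : ℓ ≠ 0 := by
  intro hc
  apply h0
  rw [h, hc]; simp

end PsiAux

open PsiAux in
/-- If `D₁ ≡ D₂ (mod (2m)²)` are discriminants then `ψ_{D₁}(m) = ψ_{D₂}(m)`. -/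
theorem psi_eq_of_congr_mod_sq (m : ℕ) (hm : 0 < m) (D₁ D₂ : ℤ)
    (hD₁ : IsDiscriminant D₁) (hD₂ : IsDiscriminant D₂)
    (hcong : D₁ ≡ D₂ [ZMOD (2 * (m : ℤ)) ^ 2]) :
    psi D₁ m = psi D₂ m := by
  have hm' : m ≠ 0 := hm.ne'
  have hdvd : (4 * (m:ℤ)^2) ∣ D₂ - D₁ := by
    have h := hcong.dvd
    rwa [show (2 * (m:ℤ))^2 = 4 * m^2 by ring] at h
  have hfund1 : IsFundamentalDiscriminant (1:ℤ) :=
    Or.inl ⟨squarefree_one, by norm_num⟩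
  by_cases h1 : D₁ = 0 <;> by_cases h2 : D₂ = 0
  · rw [h1, h2]
  · -- D₁ = 0, D₂ ≠ 0
    subst h1
    have hex₂ := exists_decomp hD₂ h2
    rw [psi_eq_kron h2 hex₂ m, psi, if_pos rfl]
    obtain ⟨hf₂, he₂⟩ := hex₂.choose_spec
    have hℓ₂ : hex₂.choose.2 ≠ 0 := ell_ne_zero h2 he₂
    have : kron hex₂.choose.1 (m / m.gcd hex₂.choose.2)
        = kron 1 (m / m.gcd (2*m)) := by
      apply kron_congr hm' hf₂ hfund1 hℓ₂ (by omega)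
      have hD2 : (4 * (m:ℤ)^2) ∣ D₂ := by simpa using hdvd
      rw [← he₂, show (1:ℤ) * (((2*m : ℕ)):ℤ)^2 = 4*(m:ℤ)^2 by push_cast; ring]
      exact dvd_sub hD2 dvd_rfl
    rw [this, kron_one_left]
  · -- D₁ ≠ 0, D₂ = 0
    subst h2
    have hex₁ := exists_decomp hD₁ h1
    rw [psi_eq_kron h1 hex₁ m, psi, if_pos rfl]
    obtain ⟨hf₁, he₁⟩ := hex₁.choose_spec
    have hℓ₁ : hex₁.choose.2 ≠ 0 := ell_ne_zero h1 he₁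
    have : kron hex₁.choose.1 (m / m.gcd hex₁.choose.2)
        = kron 1 (m / m.gcd (2*m)) := by
      apply kron_congr hm' hf₁ hfund1 hℓ₁ (by omega)
      have hD1 : (4 * (m:ℤ)^2) ∣ D₁ := by
        have h' : (4 * (m:ℤ)^2) ∣ (0:ℤ) - D₁ := hdvd
        simpa using h'
      rw [← he₁, show (1:ℤ) * (((2*m : ℕ)):ℤ)^2 = 4*(m:ℤ)^2 by push_cast; ring]
      exact dvd_sub hD1 dvd_rfl
    rw [this, kron_one_left]
  · -- both nonzero
    have hex₁ := exists_decomp hD₁ h1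
    have hex₂ := exists_decomp hD₂ h2
    rw [psi_eq_kron h1 hex₁ m, psi_eq_kron h2 hex₂ m]
    obtain ⟨hf₁, he₁⟩ := hex₁.choose_spec
    obtain ⟨hf₂, he₂⟩ := hex₂.choose_spec
    apply kron_congr hm' hf₁ hf₂ (ell_ne_zero h1 he₁) (ell_ne_zero h2 he₂)
    rw [← he₁, ← he₂]
    rw [show D₁ - D₂ = -(D₂ - D₁) by ring]
    exact dvd_neg.mpr hdvd
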